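/- arXiv:1509.03059 — 4 statements merged into one kernel-verified Lean document; each statement's English description precedes it below -/
import Mathlib

section
/- Let k be a field and P ∈ k[X] a monic non-constant polynomial with P(0) = 0. If P(X+Y) lies in the ideal of k[X,Y] generated by P(X) and P(Y), then P is additive, i.e. P(X+Y) = P(X) + P(Y) in k[X,Y]. -/
open Polynomial

/-- If `P` is a monic non-constant polynomial with `P(0) = 0` and `P(X+Y)` lies in the
ideal of `k[X,Y]` generated by `P(X)` and `P(Y)`, then `P(X+Y) = P(X) + P(Y)`. -/
theorem additive_of_mem_span {k : Type*} [Field k] (P : Polynomial k)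
    (hmonic : P.Monic) (hdeg : 0 < P.natDegree) (h0 : P.eval 0 = 0)
    (hmem : Polynomial.aeval (MvPolynomial.X 0 + MvPolynomial.X 1 : MvPolynomial (Fin 2) k) P ∈
      Ideal.span {Polynomial.aeval (MvPolynomial.X 0 : MvPolynomial (Fin 2) k) P,
                  Polynomial.aeval (MvPolynomial.X 1 : MvPolynomial (Fin 2) k) P}) :
    Polynomial.aeval (MvPolynomial.X 0 + MvPolynomial.X 1 : MvPolynomial (Fin 2) k) P =
      Polynomial.aeval (MvPolynomial.X 0 : MvPolynomial (Fin 2) k) P +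
      Polynomial.aeval (MvPolynomial.X 1 : MvPolynomial (Fin 2) k) P := by
  classical
  set n := P.natDegree with hn
  set F : MvPolynomial (Fin 2) k :=
    Polynomial.aeval (MvPolynomial.X 0 + MvPolynomial.X 1) P with hF
  set G : MvPolynomial (Fin 2) k := Polynomial.aeval (MvPolynomial.X 0) P with hG
  set H : MvPolynomial (Fin 2) k := Polynomial.aeval (MvPolynomial.X 1) P with hH
  -- the two algebra maps between `MvPolynomial (Fin 2) k` and `k[Y][X]`
  set φ : MvPolynomial (Fin 2) k →ₐ[k] Polynomial (Polynomial k) :=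
    MvPolynomial.aeval ![Polynomial.X, Polynomial.C Polynomial.X] with hφ
  set ψ : Polynomial (Polynomial k) →ₐ[k] MvPolynomial (Fin 2) k :=
    Polynomial.aevalTower (Polynomial.aeval (MvPolynomial.X 1)) (MvPolynomial.X 0) with hψ
  have hψφ : ∀ x, ψ (φ x) = x := by
    intro x
    have hcomp : (ψ.comp φ) = AlgHom.id k _ := by
      apply MvPolynomial.algHom_ext
      intro i
      fin_cases i <;> simp [hφ, hψ]
    calc ψ (φ x) = (ψ.comp φ) x := rfl
      _ = x := by rw [hcomp]; rfl
  have hφX0 : φ (MvPolynomial.X 0) = Polynomial.X := by simp [hφ]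
  have hφX1 : φ (MvPolynomial.X 1) = Polynomial.C Polynomial.X := by simp [hφ]
  -- images of F, G, H under φ
  set Pm : Polynomial (Polynomial k) := P.map (algebraMap k (Polynomial k)) with hPm
  have haevalX : Polynomial.aeval (Polynomial.X : Polynomial (Polynomial k)) P = Pm := by
    rw [hPm, ← Polynomial.aeval_map_algebraMap (Polynomial k)
      (Polynomial.X : Polynomial (Polynomial k)) P]
    exact Polynomial.aeval_X_left_apply _
  have hφG : φ G = Pm := by
    rw [hG, ← Polynomial.aeval_algHom_apply, hφX0, haevalX]
  have hφH : φ H = Polynomial.C P := by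
    rw [hH, ← Polynomial.aeval_algHom_apply, hφX1]
    have h := Polynomial.hom_eval₂ P (algebraMap k (Polynomial k))
      (Polynomial.C : Polynomial k →+* Polynomial (Polynomial k)) Polynomial.X
    rw [show ((Polynomial.C : Polynomial k →+* Polynomial (Polynomial k)).comp
        (algebraMap k (Polynomial k))) = algebraMap k (Polynomial (Polynomial k)) from rfl] at h
    rw [Polynomial.aeval_def, ← h, ← Polynomial.aeval_def, Polynomial.aeval_X_left_apply]
  have hφF : φ F = Pm.comp (Polynomial.X + Polynomial.C Polynomial.X) := by
    rw [hF, ← Polynomial.aeval_algHom_apply, map_add, hφX0, hφX1,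
      ← Polynomial.aeval_map_algebraMap (Polynomial k)
        (Polynomial.X + Polynomial.C Polynomial.X : Polynomial (Polynomial k)) P, ← hPm,
      Polynomial.comp_eq_aeval]
  -- basic degree facts
  have hPne : P ≠ 0 := hmonic.ne_zero
  have hPmMonic : Pm.Monic := hmonic.map _
  have hPmdeg : Pm.natDegree = n := hmonic.natDegree_map _
  have hlin : (Polynomial.X + Polynomial.C (Polynomial.X : Polynomial k)).Monic :=
    Polynomial.monic_X_add_C _
  have hφFMonic : (φ F).Monic := by
    rw [hφF]
    exact hPmMonic.comp hlin (by simp)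
  have hφFdeg : (φ F).natDegree = n := by
    rw [hφF, Polynomial.natDegree_comp, hPmdeg]
    simp
  -- the span membership gives a linear combination
  obtain ⟨a, b, hab⟩ := Ideal.mem_span_pair.mp hmem
  have hab' : φ a * Pm + φ b * Polynomial.C P = φ F := by
    rw [← hφG, ← hφH, ← map_mul, ← map_mul, ← map_add]
    exact congrArg φ hab
  -- divide φ b by Pm
  set q : Polynomial (Polynomial k) := φ b /ₘ Pm with hq
  set r : Polynomial (Polynomial k) := φ b %ₘ Pm with hr
  have hdiv : r + Pm * q = φ b := Polynomial.modByMonic_add_div (φ b) Pm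
  have hrdeg : r.degree < (n : WithBot ℕ) := by
    have := Polynomial.degree_modByMonic_lt (φ b) hPmMonic
    rwa [Polynomial.degree_eq_natDegree hPmMonic.ne_zero, hPmdeg] at this
  -- rewrite the combination
  set c : Polynomial (Polynomial k) := φ a + q * Polynomial.C P with hc
  have hkey : c * Pm + r * Polynomial.C P = φ F := by
    rw [hc, ← hab', ← hdiv]; ring
  -- show c = 1
  have hnpos : (0 : WithBot ℕ) < (n : WithBot ℕ) := by exact_mod_cast hdeg
  have hrC : (r * Polynomial.C P).degree < (n : WithBot ℕ) :=
    lt_of_le_of_lt (Polynomial.degree_mul_le _ _)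
      (by
        have : (Polynomial.C P).degree ≤ 0 := Polynomial.degree_C_le
        calc r.degree + (Polynomial.C P).degree ≤ r.degree + 0 := add_le_add_right this _
          _ = r.degree := by rw [add_zero]
          _ < (n : WithBot ℕ) := hrdeg)
  have hcPm : (c * Pm).degree ≤ (n : WithBot ℕ) := by
    have h1 : (c * Pm).degree = (φ F - r * Polynomial.C P).degree := by
      rw [← hkey]; ring_nf
    rw [h1]
    refine le_trans (Polynomial.degree_sub_le _ _) ?_
    refine max_le ?_ (le_of_lt hrC)
    rw [← hφFdeg]
    exact Polynomial.degree_le_natDegree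
  have hcdeg : c.degree ≤ 0 := by
    by_contra hcon
    push_neg at hcon
    have hcne : c ≠ 0 := by
      intro h; rw [h, Polynomial.degree_zero] at hcon
      exact absurd hcon (by simp)
    have : (c * Pm).degree = c.degree + Pm.degree := Polynomial.degree_mul
    rw [this, Polynomial.degree_eq_natDegree hPmMonic.ne_zero, hPmdeg] at hcPm
    have : (0 : WithBot ℕ) + (n : WithBot ℕ) < c.degree + (n : WithBot ℕ) := by
      apply WithBot.add_lt_add_right
      · simp
      · exact hcon
    rw [zero_add] at this
    exact absurd (lt_of_lt_of_le this hcPm) (lt_irrefl _)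
  have hcC : c = Polynomial.C (c.coeff 0) := Polynomial.eq_C_of_degree_le_zero hcdeg
  have hc1 : c = 1 := by
    have hcoeff : (c * Pm + r * Polynomial.C P).coeff n = (φ F).coeff n := by rw [hkey]
    rw [Polynomial.coeff_add, Polynomial.coeff_mul_C,
      Polynomial.coeff_eq_zero_of_degree_lt hrdeg, zero_mul, add_zero] at hcoeff
    rw [hcC, Polynomial.coeff_C_mul] at hcoeff
    have h1 : Pm.coeff n = 1 := by
      rw [← hPmdeg]; exact hPmMonic.coeff_natDegree
    have h2 : (φ F).coeff n = 1 := by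
      rw [← hφFdeg]; exact hφFMonic.coeff_natDegree
    rw [h1, h2, mul_one] at hcoeff
    rw [hcC, hcoeff, Polynomial.C_1]
  have hFeq : φ F = Pm + r * Polynomial.C P := by
    rw [← hkey, hc1, one_mul]
  -- pull back to MvPolynomial and use the swap symmetry
  have hFGr : F = G + ψ r * H := by
    have := congrArg ψ hFeq
    rwa [hψφ, map_add, map_mul, ← hφG, ← hφH, hψφ, hψφ] at this
  set σ : MvPolynomial (Fin 2) k →ₐ[k] MvPolynomial (Fin 2) k :=
    MvPolynomial.rename (Equiv.swap (0 : Fin 2) 1) with hσ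
  have hσ0 : σ (MvPolynomial.X 0) = MvPolynomial.X 1 := by simp [hσ]
  have hσ1 : σ (MvPolynomial.X 1) = MvPolynomial.X 0 := by
    simp [hσ, Equiv.swap_apply_right]
  have hσF : σ F = F := by
    rw [hF, ← Polynomial.aeval_algHom_apply, map_add, hσ0, hσ1, add_comm]
  have hσG : σ G = H := by
    rw [hG, ← Polynomial.aeval_algHom_apply, hσ0, hH]
  have hσH : σ H = G := by
    rw [hH, ← Polynomial.aeval_algHom_apply, hσ1, hG]
  -- apply σ and then φ
  have hFHt : φ F = Polynomial.C P + φ (σ (ψ r)) * Pm := by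
    have := congrArg σ hFGr
    rw [hσF, map_add, map_mul, hσG, hσH] at this
    have := congrArg φ this
    rwa [map_add, map_mul, hφH, hφG] at this
  set t : Polynomial (Polynomial k) := φ (σ (ψ r)) with ht
  have hbal : (1 - t) * Pm = (1 - r) * Polynomial.C P := by
    have h1 : Pm + r * Polynomial.C P = Polynomial.C P + t * Pm := by
      rw [← hFeq, hFHt]
    ring_nf
    ring_nf at h1
    linear_combination h1
  have hCPne : (Polynomial.C P : Polynomial (Polynomial k)) ≠ 0 := by
    simpa using hPne
  have ht1 : t = 1 := by
    by_contra htne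
    have h1t : (1 : Polynomial (Polynomial k)) - t ≠ 0 := sub_ne_zero.mpr (Ne.symm htne)
    have hL : (n : WithBot ℕ) ≤ ((1 - t) * Pm).degree := by
      rw [Polynomial.degree_mul, Polynomial.degree_eq_natDegree hPmMonic.ne_zero, hPmdeg]
      have : (0 : WithBot ℕ) ≤ (1 - t).degree := Polynomial.zero_le_degree_iff.mpr h1t
      calc (n : WithBot ℕ) = 0 + n := by rw [zero_add]
        _ ≤ (1 - t).degree + n := add_le_add_left this _
    have hR : ((1 - r) * Polynomial.C P).degree < (n : WithBot ℕ) := by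
      refine lt_of_le_of_lt (Polynomial.degree_mul_le _ _) ?_
      have h2 : (Polynomial.C P : Polynomial (Polynomial k)).degree ≤ 0 :=
        Polynomial.degree_C_le
      have h3 : (1 - r).degree < (n : WithBot ℕ) := by
        refine lt_of_le_of_lt (Polynomial.degree_sub_le _ _) ?_
        refine max_lt ?_ hrdeg
        rw [Polynomial.degree_one]
        exact hnpos
      calc (1 - r).degree + (Polynomial.C P).degree ≤ (1 - r).degree + 0 :=
            add_le_add_right h2 _
        _ = (1 - r).degree := by rw [add_zero]
        _ < (n : WithBot ℕ) := h3
    rw [hbal] at hL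
    exact absurd (lt_of_le_of_lt hL hR) (lt_irrefl _)
  have hr1 : r = 1 := by
    rw [ht1, sub_self, zero_mul] at hbal
    have := mul_eq_zero.mp hbal.symm
    rcases this with h | h
    · exact (sub_eq_zero.mp h).symm
    · exact absurd h hCPne
  -- conclude
  have : φ F = φ G + φ H := by
    rw [hFeq, hr1, one_mul, hφG, hφH]
  have := congrArg ψ this
  rwa [hψφ, map_add, hψφ, hψφ] at this
end

section
/- Let k be a field of characteristic p > 0 and a ∈ k an element that is not a p-th power in k. If x(t), y(t) ∈ k[t] satisfy y(t)^p = x(t) + a·x(t)^p, then both x(t) and y(t) are constant polynomials. -/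
open Polynomial

/-- If `a` is not a `p`-th power in `k` (char `k = p > 0`) and polynomials `x(t), y(t)`
satisfy `y(t)^p = x(t) + a·x(t)^p`, then `x(t)` and `y(t)` are constant. -/
theorem wound_unipotent_no_line {k : Type*} [Field k] (p : ℕ) [Fact p.Prime] [CharP k p]
    (a : k) (ha : ∀ c : k, c ^ p ≠ a) (x y : Polynomial k)
    (h : y ^ p = x + Polynomial.C a * x ^ p) :
    (∃ c : k, x = Polynomial.C c) ∧ (∃ d : k, y = Polynomial.C d) := by
  have hp : 0 < p := (Fact.out : p.Prime).pos
  have ha0 : a ≠ 0 := fun h0 => ha 0 (by simp [h0, hp.ne'])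
  have hxc : x.natDegree = 0 := by
    by_contra hn
    have hn1 : 1 ≤ x.natDegree := Nat.one_le_iff_ne_zero.mpr hn
    have hx0 : x ≠ 0 := fun h0 => hn (by simp [h0])
    have hdeg2 : (C a * x ^ p).natDegree = p * x.natDegree := by
      rw [natDegree_C_mul ha0, natDegree_pow]
    have hlt' : x.natDegree < p * x.natDegree := by
      conv_lhs => rw [← one_mul x.natDegree]
      exact (Nat.mul_lt_mul_right hn1).mpr (Fact.out : p.Prime).one_lt
    have hlt : x.natDegree < (C a * x ^ p).natDegree := hdeg2 ▸ hlt'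
    have hdeg : (y ^ p).natDegree = p * x.natDegree := by
      rw [h, natDegree_add_eq_right_of_natDegree_lt hlt, hdeg2]
    have hlc : y.leadingCoeff ^ p = a * x.leadingCoeff ^ p := by
      have h1 : (y ^ p).coeff (p * x.natDegree) = y.leadingCoeff ^ p := by
        rw [← hdeg, coeff_natDegree, leadingCoeff_pow]
      have hx0' : x.coeff (p * x.natDegree) = 0 :=
        coeff_eq_zero_of_natDegree_lt hlt'
      have h2 : (x + C a * x ^ p).coeff (p * x.natDegree) = a * x.leadingCoeff ^ p := by
        rw [coeff_add, hx0', coeff_C_mul, zero_add, ← natDegree_pow x p,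
          coeff_natDegree, leadingCoeff_pow]
      rw [← h1, h, h2]
    have hxlc : x.leadingCoeff ≠ 0 := leadingCoeff_ne_zero.mpr hx0
    exact ha (y.leadingCoeff / x.leadingCoeff) (by rw [div_pow, hlc, mul_div_assoc, div_self (pow_ne_zero _ hxlc), mul_one])
  have hcx : x = C (x.coeff 0) := eq_C_of_natDegree_eq_zero hxc
  have hyc : y.natDegree = 0 := by
    have h0 : (y ^ p).natDegree = 0 := by
      rw [h, hcx, ← C_pow, ← C_mul, ← C_add, natDegree_C]
    rw [natDegree_pow] at h0
    exact (Nat.mul_eq_zero.mp h0).resolve_left hp.ne'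
  exact ⟨⟨x.coeff 0, hcx⟩, ⟨y.coeff 0, eq_C_of_natDegree_eq_zero hyc⟩⟩
end

section
/- Let S be a submonoid of ℕ × ℕ (under componentwise addition) such that: (a) (ℓ, 0) ∉ S for every ℓ ≥ 1, and (b) for all positive integers p, q there exists a positive integer m with (m·q, m·p) ∈ S. Then S is not finitely generated. -/
/-- A submonoid `S` of `ℕ × ℕ` avoiding the positive part of the first axis but whose
associated cone accumulates to the first axis is not finitely generated. -/
theorem submonoid_not_fg {S : AddSubmonoid (ℕ × ℕ)}
    (ha : ∀ ℓ : ℕ, 1 ≤ ℓ → (ℓ, 0) ∉ S)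
    (hb : ∀ p q : ℕ, 0 < p → 0 < q → ∃ m : ℕ, 0 < m ∧ (m * q, m * p) ∈ S) :
    ¬ S.FG := by
  rintro ⟨T, hT⟩
  set N := T.sup Prod.fst with hN
  have key : ∀ s ∈ S, s.1 ≤ N * s.2 := by
    intro s hs
    rw [← hT] at hs
    induction hs using AddSubmonoid.closure_induction with
    | mem g hg =>
      rcases Nat.eq_zero_or_pos g.2 with h0 | hpos
      · have hg1 : g.1 = 0 := by
          by_contra h
          refine ha g.1 (Nat.one_le_iff_ne_zero.mpr h) ?_
          have hgS : g ∈ S := hT ▸ AddSubmonoid.subset_closure hg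
          have : ((g.1, (0:ℕ)) : ℕ × ℕ) = g := by
            rw [← h0]
          rwa [this]
        simp [hg1]
      · calc g.1 ≤ N := Finset.le_sup hg
          _ ≤ N * g.2 := Nat.le_mul_of_pos_right _ hpos
    | zero => simp
    | add a b hamem hbmem iha ihb =>
      have : (a + b).1 = a.1 + b.1 := rfl
      rw [this, Prod.snd_add, Nat.mul_add]
      exact Nat.add_le_add iha ihb
  obtain ⟨m, hm, hmem⟩ := hb 1 (N + 1) Nat.one_pos (Nat.succ_pos N)
  have h := key _ hmem
  simp only [mul_one] at h
  nlinarith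
end

section
/- Let k be a perfect field and R a finite-dimensional local commutative k-algebra with maximal ideal m and residue field K = R/m. Then the quotient map R → K admits a k-algebra section, i.e. there is a k-algebra homomorphism s : K → R with (R → K) ∘ s = id. Consequently K lifts to a subfield of R. -/
open IsLocalRing Polynomial

/-- Over a perfect field `k`, the residue field of a finite-dimensional local commutative
`k`-algebra lifts: the quotient map `R → R/m` admits a `k`-algebra section. -/
theorem residue_field_lifts {k R : Type*} [Field k] [PerfectField k] [CommRing R]
    [Algebra k R] [IsLocalRing R] [FiniteDimensional k R] :
    ∃ s : IsLocalRing.ResidueField R →ₐ[k] R,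
      ∀ x : IsLocalRing.ResidueField R, IsLocalRing.residue R (s x) = x := by
  have hart : IsArtinianRing R := isArtinian_of_tower k inferInstance
  have hnil : IsNilpotent (maximalIdeal R) := by
    rw [← IsLocalRing.jacobson_eq_maximalIdeal ⊥ bot_ne_top]
    exact IsArtinianRing.isNilpotent_jacobson_bot
  obtain ⟨N, hN⟩ := hnil
  -- R is maximal-ideal-adically complete since m is nilpotent
  have hbot : ∀ n, N ≤ n → (maximalIdeal R ^ n • ⊤ : Submodule R R) = ⊥ := fun n hn => by
    rw [← Nat.sub_add_cancel hn, pow_add, hN, mul_zero, Submodule.zero_eq_bot,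
      Submodule.bot_smul]
  have h1 : IsHausdorff (maximalIdeal R) R := by
    constructor
    intro x hx
    have hx' := hx N
    rw [hbot N le_rfl, SModEq.bot] at hx'
    exact hx'
  have h2 : IsPrecomplete (maximalIdeal R) R := by
    constructor
    intro f hf
    refine ⟨f N, fun n => ?_⟩
    rcases le_total n N with h | h
    · exact hf h
    · have := hf h
      rw [hbot N le_rfl, SModEq.bot] at this
      rw [hbot n h, SModEq.bot]
      exact this.symm
  have hcomp : IsAdicComplete (maximalIdeal R) R := ⟨⟩
  have hhens : HenselianRing R (maximalIdeal R) := IsAdicComplete.henselianRing R _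
  -- the residue field is a finite separable extension of k
  let π : R →ₐ[k] ResidueField R := ⟨residue R, fun r => rfl⟩
  have hKfin : FiniteDimensional k (ResidueField R) :=
    Module.Finite.of_surjective π.toLinearMap Ideal.Quotient.mk_surjective
  have hsep : Algebra.IsSeparable k (ResidueField R) := inferInstance
  let pb : PowerBasis k (ResidueField R) := Field.powerBasisOfFiniteOfSeparable k (ResidueField R)
  let f := minpoly k pb.gen
  have hint : IsIntegral k pb.gen := Algebra.IsIntegral.isIntegral pb.gen
  have hfmonic : f.Monic := minpoly.monic hint
  -- lift the generator to a root in R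
  obtain ⟨a₀, ha₀⟩ : ∃ a₀ : R, residue R a₀ = pb.gen := Ideal.Quotient.mk_surjective pb.gen
  have key : ∀ (g : k[X]) (a : R), residue R (eval a (g.map (algebraMap k R))) =
      aeval (residue R a) g := fun g a => by
    rw [Polynomial.eval_map, Polynomial.hom_eval₂, aeval_def]; rfl
  have hmem : eval a₀ (f.map (algebraMap k R)) ∈ maximalIdeal R := by
    have : residue R (eval a₀ (f.map (algebraMap k R))) = 0 := by
      rw [key, ha₀, minpoly.aeval]
    rwa [← residue_eq_zero_iff]
  have hderiv : IsUnit (Ideal.Quotient.mk (maximalIdeal R)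
      (eval a₀ (derivative (f.map (algebraMap k R))))) := by
    have hsepf : f.Separable := Algebra.IsSeparable.isSeparable k pb.gen
    have hne : aeval pb.gen (derivative f) ≠ 0 :=
      hsepf.aeval_derivative_ne_zero (minpoly.aeval k pb.gen)
    have : residue R (eval a₀ (derivative (f.map (algebraMap k R)))) ≠ 0 := by
      rw [Polynomial.derivative_map, key, ha₀]
      exact hne
    exact isUnit_iff_ne_zero.mpr this
  obtain ⟨a, ha, hamem⟩ := hhens.is_henselian (f.map (algebraMap k R))
    (hfmonic.map _) a₀ hmem hderiv
  have haroot : aeval a f = 0 := by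
    rwa [← Polynomial.eval_map_algebraMap]
  have hares : residue R a = pb.gen := by
    have : residue R (a - a₀) = 0 := residue_eq_zero_iff _ |>.mpr hamem
    rw [map_sub, sub_eq_zero] at this
    rw [this, ha₀]
  refine ⟨pb.lift a haroot, fun x => ?_⟩
  have : π.comp (pb.lift a haroot) = AlgHom.id k (ResidueField R) := by
    apply pb.algHom_ext
    simp only [AlgHom.comp_apply, PowerBasis.lift_gen, AlgHom.id_apply]
    exact hares
  exact congrArg (fun g => g x) this |>.trans rfl
end
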